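/- Let f:ℝ²→ℝ be continuous with supp f ⊂ {(x,y): y ≥ x²}, let φ be an even nonnegative C_c^∞ function supported in [−1,1] with ∫φ=1, let ε>0, γ∈ℝ and k≥0 be an integer. Then ∫_{|ξ|≤ε} R[x^k f](ξ,γ) φ_ε(ξ) dξ = ∫_ℝ x^k M_{φ,ε,γ}[f](x) dx. -/

import Mathlib

open MeasureTheory Set

/-- The mean `M_{φ,ε,γ}[f](x)`: convolution of `f(x,·)` with `φ_{ε|x|}` at `γ`,
with the convention `M_{φ,ε,γ}[f](0) = f(0,γ)`. -/
noncomputable def mean (φ : ℝ → ℝ) (ε γ : ℝ) (f : ℝ → ℝ → ℝ) (x : ℝ) : ℝ :=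
  if x = 0 then f 0 γ
  else ∫ y : ℝ, f x y * ((ε * |x|)⁻¹ * φ ((γ - y) / (ε * |x|)))

theorem stmt3 (f : ℝ → ℝ → ℝ)
    (hf : Continuous (fun p : ℝ × ℝ => f p.1 p.2))
    (hsupp : ∀ x y : ℝ, y < x^2 → f x y = 0)
    (φ : ℝ → ℝ) (hφsm : ContDiff ℝ (⊤ : ℕ∞) φ)
    (hφsupp : Function.support φ ⊆ Icc (-1 : ℝ) 1)
    (hφpos : ∀ t, 0 ≤ φ t) (hφeven : ∀ t, φ (-t) = φ t)
    (hφint : (∫ t : ℝ, φ t) = 1)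
    (ε : ℝ) (hε : 0 < ε) (γ : ℝ) (k : ℕ) :
    (∫ ξ in Icc (-ε) ε, (∫ x : ℝ, x^k * f x (ξ * x + γ)) * (ε⁻¹ * φ (ξ / ε))) =
      ∫ x : ℝ, x^k * mean φ ε γ f x := by
  have hεne : ε ≠ 0 := hε.ne'
  -- φ(ξ/ε) vanishes outside [-ε, ε]
  have hφ0 : ∀ ξ : ℝ, ξ ∉ Icc (-ε) ε → φ (ξ / ε) = 0 := by
    intro ξ hξ
    by_contra h
    have h2 := hφsupp (Function.mem_support.2 h)
    simp only [mem_Icc, not_and_or, not_le] at hξ h2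
    rcases hξ with h1 | h1
    · have : ξ / ε < -1 := by rw [div_lt_iff₀ hε]; linarith
      linarith [h2.1]
    · have : (1:ℝ) < ξ / ε := by rw [lt_div_iff₀ hε]; linarith
      linarith [h2.2]
  set g : ℝ → ℝ → ℝ := fun ξ x => x ^ k * f x (ξ * x + γ) * (ε⁻¹ * φ (ξ / ε)) with hg
  -- continuity
  have hgcont : Continuous (Function.uncurry g) := by
    apply Continuous.mul
    · exact (continuous_snd.pow k).mul
        (hf.comp (continuous_snd.prodMk ((continuous_fst.mul continuous_snd).add
          continuous_const)))
    · exact continuous_const.mul (hφsm.continuous.comp (continuous_fst.div_const ε))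
  -- compact support
  set R : ℝ := ε + |γ| + 1 with hRdef
  have hgsupp : ∀ p : ℝ × ℝ, p ∉ Icc (-ε) ε ×ˢ Icc (-R) R → Function.uncurry g p = 0 := by
    rintro ⟨ξ, x⟩ hp
    simp only [mem_prod, not_and_or] at hp
    rcases hp with h1 | h1
    · simp [Function.uncurry, hg, hφ0 ξ h1]
    · by_cases hξ : ξ ∈ Icc (-ε) ε
      · rw [mem_Icc] at hξ
        have hξabs : |ξ| ≤ ε := abs_le.2 ⟨hξ.1, hξ.2⟩
        have hx : R < |x| := by
          rw [mem_Icc, not_and_or, not_le, not_le] at h1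
          rw [lt_abs]
          rcases h1 with h' | h'
          · exact Or.inr (by linarith)
          · exact Or.inl h'
        have hx0 : (0:ℝ) < |x| := by
          have : (0:ℝ) < R := by rw [hRdef]; linarith [abs_nonneg γ]
          linarith
        have hfz : f x (ξ * x + γ) = 0 := by
          apply hsupp
          have e1 : ξ * x ≤ ε * |x| := le_trans (le_abs_self _)
            (by rw [abs_mul]; exact mul_le_mul_of_nonneg_right hξabs (abs_nonneg x))
          have e2 : (1:ℝ) ≤ |x| := by
            have : (1:ℝ) ≤ R := by rw [hRdef]; linarith [abs_nonneg γ]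
            linarith
          have e3 : x ^ 2 = |x| * |x| := by rw [abs_mul_abs_self, sq]
          nlinarith [mul_lt_mul_of_pos_right hx hx0,
            mul_le_mul_of_nonneg_left e2 (by positivity : (0:ℝ) ≤ |γ| + 1),
            le_abs_self γ]
        simp [Function.uncurry, hg, hfz]
      · simp [Function.uncurry, hg, hφ0 ξ hξ]
  have hgcs : HasCompactSupport (Function.uncurry g) :=
    HasCompactSupport.intro (isCompact_Icc.prod isCompact_Icc) hgsupp
  have hgint : Integrable (Function.uncurry g) (volume.prod volume) := by
    rw [← Measure.volume_eq_prod]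
    exact hgcont.integrable_of_hasCompactSupport hgcs
  -- rewrite LHS as an iterated integral of g
  have lhs1 : (∫ ξ in Icc (-ε) ε, (∫ x : ℝ, x ^ k * f x (ξ * x + γ)) * (ε⁻¹ * φ (ξ / ε)))
      = ∫ ξ : ℝ, ∫ x : ℝ, g ξ x := by
    rw [setIntegral_eq_integral_of_forall_compl_eq_zero
      (fun ξ hξ => by simp [hφ0 ξ hξ])]
    exact integral_congr_ae (Filter.Eventually.of_forall fun ξ =>
      (integral_mul_const _ _).symm)
  rw [lhs1, integral_integral_swap hgint]
  -- pointwise identification of the inner integral with x^k * mean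
  apply integral_congr_ae
  apply Filter.Eventually.of_forall
  intro x
  show (∫ ξ : ℝ, g ξ x) = x ^ k * mean φ ε γ f x
  by_cases hx : x = 0
  · subst hx
    have : ∀ ξ : ℝ, g ξ (0:ℝ) = (0:ℝ) ^ k * f 0 γ * (ε⁻¹ * φ (ξ / ε)) := by
      intro ξ; simp [hg]
    rw [integral_congr_ae (Filter.Eventually.of_forall this)]
    rw [integral_const_mul, integral_const_mul, Measure.integral_comp_div φ ε, hφint, smul_eq_mul, mul_one,
      abs_of_pos hε, inv_mul_cancel₀ hεne, mul_one]
    simp [mean]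
  · have hax : (0:ℝ) < |x| := abs_pos.2 hx
    have key : ∀ ξ : ℝ, g ξ x =
        x ^ k * |x| * (f x (ξ * x + γ) *
          ((ε * |x|)⁻¹ * φ ((γ - (ξ * x + γ)) / (ε * |x|)))) := by
      intro ξ
      have hφeq : φ (ξ / ε) = φ ((γ - (ξ * x + γ)) / (ε * |x|)) := by
        have : (γ - (ξ * x + γ)) / (ε * |x|) = -(ξ * x) / (ε * |x|) := by ring_nf
        rw [this]
        rcases Ne.lt_or_gt hx with hneg | hpos
        · rw [abs_of_neg hneg]
          congr 1
          field_simp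
        · rw [abs_of_pos hpos]
          have : -(ξ * x) / (ε * x) = -(ξ / ε) := by field_simp
          rw [this, hφeven]
      have hc : ε⁻¹ = |x| * (ε * |x|)⁻¹ := by
        field_simp
      simp only [hg]
      rw [hφeq, hc]
      ring
    rw [integral_congr_ae (Filter.Eventually.of_forall key), integral_const_mul]
    have hmean : mean φ ε γ f x =
        ∫ y : ℝ, f x y * ((ε * |x|)⁻¹ * φ ((γ - y) / (ε * |x|))) := by
      simp [mean, hx]
    have hsub : (∫ ξ : ℝ, f x (ξ * x + γ) *
          ((ε * |x|)⁻¹ * φ ((γ - (ξ * x + γ)) / (ε * |x|))))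
        = |x⁻¹| * ∫ y : ℝ, f x y * ((ε * |x|)⁻¹ * φ ((γ - y) / (ε * |x|))) := by
      have := Measure.integral_comp_mul_right
        (fun y : ℝ => f x (y + γ) * ((ε * |x|)⁻¹ * φ ((γ - (y + γ)) / (ε * |x|)))) x
      simp only [smul_eq_mul] at this
      rw [this]
      congr 1
      exact integral_add_right_eq_self
        (fun y : ℝ => f x y * ((ε * |x|)⁻¹ * φ ((γ - y) / (ε * |x|)))) γ
    rw [hsub, hmean, abs_inv]
    rw [← mul_assoc, mul_assoc (x ^ k) (|x|) (|x|⁻¹), mul_inv_cancel₀ hax.ne', mul_one]
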